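/- For every integer m ≥ 0 there exists a set P ⊂ [0,1)² of cardinality exactly 2^{2m+1} such that dist_H(p,q) ≥ 2^{-m} for all distinct p, q ∈ P. -/
import Mathlib


open MeasureTheory
open scoped ENNReal


namespace Stmt3Aux

/-- Reverse the low `N` bits of `i`. -/
def bitrev : ℕ → ℕ → ℕ
  | 0, _ => 0
  | N+1, i => 2 * bitrev N (i % 2 ^ N) + (i % 2 ^ (N+1)) / 2 ^ N

lemma topbit_lt (N i : ℕ) : (i % 2 ^ (N+1)) / 2 ^ N < 2 := by
  apply Nat.div_lt_of_lt_mul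
  calc i % 2 ^ (N+1) < 2 ^ (N+1) := Nat.mod_lt _ (by positivity)
    _ = 2 ^ N * 2 := by ring

lemma bitrev_lt (N i : ℕ) : bitrev N i < 2 ^ N := by
  induction N generalizing i with
  | zero => simp [bitrev]
  | succ N ih =>
    have h1 := ih (i % 2 ^ N)
    have h3 := topbit_lt N i
    show 2 * bitrev N (i % 2 ^ N) + (i % 2 ^ (N+1)) / 2 ^ N < 2 ^ (N+1)
    have : (2:ℕ) ^ (N+1) = 2 * 2 ^ N := by ring
    omega

lemma bitrev_mod (N i : ℕ) : bitrev N (i % 2 ^ N) = bitrev N i := by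
  cases N with
  | zero => simp [bitrev]
  | succ N =>
    show 2 * bitrev N (i % 2^(N+1) % 2 ^ N) + (i % 2^(N+1) % 2 ^ (N+1)) / 2 ^ N = _
    rw [Nat.mod_mod_of_dvd _ (pow_dvd_pow 2 (Nat.le_succ N)),
      Nat.mod_mod_of_dvd _ (dvd_refl (2 ^ (N+1)))]
    rfl

lemma bitrev_div (N : ℕ) : ∀ e i : ℕ, bitrev N i / 2 ^ e = bitrev (N - e) (i % 2 ^ (N - e)) := by
  induction N with
  | zero => intro e i; simp [bitrev]
  | succ N ih =>
    intro e i
    cases e with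
    | zero => simpa using (bitrev_mod (N+1) i).symm
    | succ e =>
      have h3 := topbit_lt N i
      show (2 * bitrev N (i % 2 ^ N) + (i % 2 ^ (N+1)) / 2 ^ N) / 2 ^ (e+1) = _
      have hdd : (2:ℕ) ^ (e+1) = 2 * 2 ^ e := by ring
      rw [hdd, ← Nat.div_div_eq_div_mul,
        Nat.mul_add_div (by norm_num), Nat.div_eq_of_lt h3, Nat.add_zero, ih e (i % 2 ^ N)]
      have hNe : N + 1 - (e + 1) = N - e := by omega
      rw [hNe, Nat.mod_mod_of_dvd _ (pow_dvd_pow 2 (by omega : N - e ≤ N))]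

lemma two_mul_add_inj {P A B x y : ℕ} (hA : A < P) (hB : B < P) (hx : x < 2) (hy : y < 2)
    (h : 2 * A + x = 2 * B + y) : A = B ∧ x = y := by omega

lemma bitrev_inj {N i j : ℕ} (h : bitrev N i = bitrev N j) : i % 2 ^ N = j % 2 ^ N := by
  induction N generalizing i j with
  | zero => simp [Nat.mod_one]
  | succ N ih =>
    have hi := bitrev_lt N (i % 2 ^ N)
    have hj := bitrev_lt N (j % 2 ^ N)
    have h3i := topbit_lt N i
    have h3j := topbit_lt N j
    simp only [bitrev] at h
    have heq : 2 * bitrev N (i % 2 ^ N) + (i % 2 ^ (N+1)) / 2 ^ N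
        = 2 * bitrev N (j % 2 ^ N) + (j % 2 ^ (N+1)) / 2 ^ N := h
    obtain ⟨h1, h2⟩ := two_mul_add_inj hi hj h3i h3j heq
    have h4 : i % 2 ^ N = j % 2 ^ N := by
      have := ih h1
      simpa using this
    have hmi : i % 2 ^ (N+1) % 2 ^ N = i % 2 ^ N :=
      Nat.mod_mod_of_dvd _ (pow_dvd_pow 2 (Nat.le_succ N))
    have hmj : j % 2 ^ (N+1) % 2 ^ N = j % 2 ^ N :=
      Nat.mod_mod_of_dvd _ (pow_dvd_pow 2 (Nat.le_succ N))
    have ei := Nat.div_add_mod (i % 2 ^ (N+1)) (2 ^ N)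
    have ej := Nat.div_add_mod (j % 2 ^ (N+1)) (2 ^ N)
    rw [hmi, h2, h4] at ei
    rw [hmj] at ej
    omega

/-- Key combinatorial lemma. -/
lemma key {N d e i j : ℕ} (hde : d + e ≤ N) (hi : i < 2 ^ N) (hj : j < 2 ^ N)
    (h1 : i / 2 ^ d = j / 2 ^ d) (h2 : bitrev N i / 2 ^ e = bitrev N j / 2 ^ e) : i = j := by
  rw [bitrev_div, bitrev_div] at h2
  have h2' : i % 2 ^ (N - e) = j % 2 ^ (N - e) := by
    have := bitrev_inj h2
    simpa using this
  have hd : i % 2 ^ d = j % 2 ^ d := by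
    have hdvd : (2:ℕ) ^ d ∣ 2 ^ (N - e) := pow_dvd_pow 2 (by omega)
    calc i % 2 ^ d = i % 2 ^ (N - e) % 2 ^ d := (Nat.mod_mod_of_dvd _ hdvd).symm
      _ = j % 2 ^ (N - e) % 2 ^ d := by rw [h2']
      _ = j % 2 ^ d := Nat.mod_mod_of_dvd _ hdvd
  have di := Nat.div_add_mod i (2 ^ d)
  have dj := Nat.div_add_mod j (2 ^ d)
  rw [h1, hd] at di
  omega


/-- If two grid points `i/2^N`, `j/2^N` lie in the same dyadic interval
`[k·2^a, (k+1)·2^a)`, then `i` and `j` agree above bit `(a+N).toNat`. -/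
lemma coord (N : ℕ) (a k : ℤ) (i j : ℕ)
    (h1 : (k : ℝ) * 2 ^ a ≤ (i : ℝ) / 2 ^ N) (h2 : (i : ℝ) / 2 ^ N < ((k : ℝ) + 1) * 2 ^ a)
    (h3 : (k : ℝ) * 2 ^ a ≤ (j : ℝ) / 2 ^ N) (h4 : (j : ℝ) / 2 ^ N < ((k : ℝ) + 1) * 2 ^ a) :
    i / 2 ^ (a + N).toNat = j / 2 ^ (a + N).toNat := by
  have hN : (0 : ℝ) < 2 ^ N := by positivity
  have hc : ((2:ℝ) ^ a) * 2 ^ N = 2 ^ (a + (N:ℤ)) := by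
    rw [zpow_add₀ (by norm_num : (2:ℝ) ≠ 0), zpow_natCast]
  have H1 : (k : ℝ) * 2 ^ (a + (N:ℤ)) ≤ i := by
    rw [← hc, ← mul_assoc]
    calc (k:ℝ) * 2 ^ a * 2 ^ N ≤ ((i:ℝ) / 2 ^ N) * 2 ^ N := by
          exact mul_le_mul_of_nonneg_right h1 (le_of_lt hN)
      _ = i := div_mul_cancel₀ _ (ne_of_gt hN)
  have H2 : (i : ℝ) < ((k : ℝ) + 1) * 2 ^ (a + (N:ℤ)) := by
    rw [← hc, ← mul_assoc]
    calc (i:ℝ) = ((i:ℝ) / 2 ^ N) * 2 ^ N := (div_mul_cancel₀ _ (ne_of_gt hN)).symm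
      _ < ((k:ℝ) + 1) * 2 ^ a * 2 ^ N := by
          exact mul_lt_mul_of_pos_right h2 hN
  have H3 : (k : ℝ) * 2 ^ (a + (N:ℤ)) ≤ j := by
    rw [← hc, ← mul_assoc]
    calc (k:ℝ) * 2 ^ a * 2 ^ N ≤ ((j:ℝ) / 2 ^ N) * 2 ^ N := by
          exact mul_le_mul_of_nonneg_right h3 (le_of_lt hN)
      _ = j := div_mul_cancel₀ _ (ne_of_gt hN)
  have H4 : (j : ℝ) < ((k : ℝ) + 1) * 2 ^ (a + (N:ℤ)) := by
    rw [← hc, ← mul_assoc]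
    calc (j:ℝ) = ((j:ℝ) / 2 ^ N) * 2 ^ N := (div_mul_cancel₀ _ (ne_of_gt hN)).symm
      _ < ((k:ℝ) + 1) * 2 ^ a * 2 ^ N := by
          exact mul_lt_mul_of_pos_right h4 hN
  by_cases hd : a + (N:ℤ) ≤ 0
  · -- interval has length ≤ 1, so i = j
    have hc1 : (2:ℝ) ^ (a + (N:ℤ)) ≤ 1 := by
      calc (2:ℝ) ^ (a + (N:ℤ)) ≤ 2 ^ (0:ℤ) := by
            exact zpow_le_zpow_right₀ one_le_two hd
        _ = 1 := by norm_num
    have hij : (i : ℝ) < (j : ℝ) + 1 := by nlinarith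
    have hji : (j : ℝ) < (i : ℝ) + 1 := by nlinarith
    have hij' : i < j + 1 := by exact_mod_cast hij
    have hji' : j < i + 1 := by exact_mod_cast hji
    have : i = j := by omega
    rw [this]
  · push_neg at hd
    set d : ℕ := (a + N).toNat with hdn
    have hdd : (a + (N:ℤ)) = (d : ℤ) := by omega
    have hP : ((2:ℝ) ^ (a + (N:ℤ))) = ((2 ^ d : ℕ) : ℝ) := by
      rw [hdd]; push_cast; rw [zpow_natCast]
    rw [hP] at H1 H2 H3 H4
    have hk0 : 0 ≤ k := by
      by_contra hk
      push_neg at hk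
      have hk1 : (k : ℝ) + 1 ≤ 0 := by exact_mod_cast by omega
      have : ((k:ℝ) + 1) * ((2 ^ d : ℕ) : ℝ) ≤ 0 :=
        mul_nonpos_of_nonpos_of_nonneg hk1 (by positivity)
      have : (i : ℝ) < 0 := lt_of_lt_of_le H2 this
      exact absurd this (not_lt.mpr (Nat.cast_nonneg i))
    set k' : ℕ := k.toNat with hk'
    have hkk : (k : ℝ) = (k' : ℕ) := by exact_mod_cast (Int.toNat_of_nonneg hk0).symm
    rw [hkk] at H1 H2 H3 H4
    have N1 : k' * 2 ^ d ≤ i := by exact_mod_cast H1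
    have N2 : i < (k' + 1) * 2 ^ d := by exact_mod_cast H2
    have N3 : k' * 2 ^ d ≤ j := by exact_mod_cast H3
    have N4 : j < (k' + 1) * 2 ^ d := by exact_mod_cast H4
    have : i / 2 ^ d = k' := Nat.div_eq_of_lt_le N1 N2
    have hj' : j / 2 ^ d = k' := Nat.div_eq_of_lt_le N3 N4
    rw [this, hj']

end Stmt3Aux


/-- A dyadic interval `[k·2^n, (k+1)·2^n)`. -/
def IsDyadicInterval (I : Set ℝ) : Prop :=
  ∃ k n : ℤ, I = Set.Ico ((k : ℝ) * 2 ^ n) (((k : ℝ) + 1) * 2 ^ n)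

/-- An axis-parallel dyadic rectangle in the plane. -/
def IsDyadicRect (R : Set (ℝ × ℝ)) : Prop :=
  ∃ I J : Set ℝ, IsDyadicInterval I ∧ IsDyadicInterval J ∧ R = I ×ˢ J

/-- `dist_H(p,q) = inf { |R|^{1/2} : R dyadic rectangle containing p and q }`. -/
noncomputable def distH (p q : ℝ × ℝ) : ℝ≥0∞ :=
  sInf {v | ∃ R : Set (ℝ × ℝ), IsDyadicRect R ∧ p ∈ R ∧ q ∈ R ∧ v = volume R ^ (1 / 2 : ℝ)}

/-- For every `m ≥ 0` there is a set `P ⊆ [0,1)²` of cardinality `2^{2m+1}` which is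
`2^{-m}`-separated with respect to `dist_H`. -/
theorem stmt3 (m : ℕ) :
    ∃ P : Finset (ℝ × ℝ),
      (↑P : Set (ℝ × ℝ)) ⊆ Set.Ico (0 : ℝ) 1 ×ˢ Set.Ico (0 : ℝ) 1 ∧
      P.card = 2 ^ (2 * m + 1) ∧
      ∀ p ∈ P, ∀ q ∈ P, p ≠ q → ENNReal.ofReal ((2 : ℝ) ^ (-(m : ℤ))) ≤ distH p q := by
  classical
  set N : ℕ := 2 * m + 1 with hN
  have h2N : (0:ℝ) < 2 ^ N := by positivity
  refine ⟨(Finset.range (2 ^ N)).image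
    (fun i : ℕ => ((i : ℝ) / 2 ^ N, (Stmt3Aux.bitrev N i : ℝ) / 2 ^ N)), ?_, ?_, ?_⟩
  · intro p hp
    simp only [Finset.coe_image, Finset.coe_range, Set.mem_image, Set.mem_Iio] at hp
    obtain ⟨i, hi, rfl⟩ := hp
    have hb := Stmt3Aux.bitrev_lt N i
    constructor
    · exact Set.mem_Ico.mpr ⟨by positivity, by rw [div_lt_one h2N]; exact_mod_cast hi⟩
    · exact Set.mem_Ico.mpr ⟨by positivity, by rw [div_lt_one h2N]; exact_mod_cast hb⟩
  · rw [Finset.card_image_of_injOn, Finset.card_range]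
    intro i _ j _ hij
    have h1 : (i:ℝ)/2^N = (j:ℝ)/2^N := congrArg Prod.fst hij
    have h2 : (i:ℝ) = (j:ℝ) := by
      field_simp at h1
      exact_mod_cast h1
    exact_mod_cast h2
  · intro p hp q hq hpq
    simp only [Finset.mem_image, Finset.mem_range] at hp hq
    obtain ⟨i, hi, rfl⟩ := hp
    obtain ⟨j, hj, rfl⟩ := hq
    apply le_sInf
    rintro v ⟨R, ⟨I, J, ⟨k, a, rfl⟩, ⟨l, b, rfl⟩, rfl⟩, hpR, hqR, rfl⟩
    obtain ⟨hpx, hpy⟩ := hpR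
    obtain ⟨hqx, hqy⟩ := hqR
    rw [Set.mem_Ico] at hpx hpy hqx hqy
    -- separation of exponents
    have hab : -(2 * (m:ℤ)) ≤ a + b := by
      by_contra hcon
      push_neg at hcon
      have hab' : a + b ≤ -(N:ℤ) := by omega
      have hx := Stmt3Aux.coord N a k i j hpx.1 hpx.2 hqx.1 hqx.2
      have hy := Stmt3Aux.coord N b l (Stmt3Aux.bitrev N i) (Stmt3Aux.bitrev N j)
        hpy.1 hpy.2 hqy.1 hqy.2
      have hij : i = j := by
        by_cases hda : a + (N:ℤ) ≤ 0
        · have h0 : (a + (N:ℤ)).toNat = 0 := by omega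
          rw [h0] at hx; simpa using hx
        · by_cases hdb : b + (N:ℤ) ≤ 0
          · have h0 : (b + (N:ℤ)).toNat = 0 := by omega
            rw [h0] at hy
            simp only [pow_zero, Nat.div_one] at hy
            have := Stmt3Aux.bitrev_inj hy
            rwa [Nat.mod_eq_of_lt hi, Nat.mod_eq_of_lt hj] at this
          · exact Stmt3Aux.key (d := (a + (N:ℤ)).toNat) (e := (b + (N:ℤ)).toNat)
              (by omega) hi hj hx hy
      exact hpq (by rw [hij])
    -- volume computation
    have hvol : volume ((Set.Ico ((k:ℝ)*2^a) (((k:ℝ)+1)*2^a)) ×ˢ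
        (Set.Ico ((l:ℝ)*2^b) (((l:ℝ)+1)*2^b))) = ENNReal.ofReal ((2:ℝ) ^ (a+b)) := by
      rw [MeasureTheory.Measure.volume_eq_prod, MeasureTheory.Measure.prod_prod,
        Real.volume_Ico, Real.volume_Ico,
        show ((k:ℝ)+1)*2^a - k*2^a = 2^a by ring,
        show ((l:ℝ)+1)*2^b - l*2^b = 2^b by ring,
        ← ENNReal.ofReal_mul (by positivity),
        ← zpow_add₀ (by norm_num : (2:ℝ) ≠ 0)]
    rw [hvol, ENNReal.ofReal_rpow_of_pos (by positivity)]
    apply ENNReal.ofReal_le_ofReal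
    rw [show (2:ℝ)^(a+b) = (2:ℝ) ^ (((a+b : ℤ)):ℝ) from (Real.rpow_intCast 2 (a+b)).symm,
      show (2:ℝ)^(-(m:ℤ)) = (2:ℝ) ^ (((-(m:ℤ) : ℤ)):ℝ) from (Real.rpow_intCast 2 _).symm,
      ← Real.rpow_mul (by norm_num : (0:ℝ) ≤ 2)]
    rw [Real.rpow_le_rpow_left_iff one_lt_two]
    have hab' : -(2*(m:ℝ)) ≤ (a:ℝ) + (b:ℝ) := by exact_mod_cast hab
    push_cast
    linarith
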